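/- There exists a cascade (X,f) on a complete metric space that is thickly sensitive but not syndetically sensitive. -/

import Mathlib

/-- `A ⊆ ℕ` is syndetic: bounded gaps. -/
def IsSyndetic (A : Set ℕ) : Prop := ∃ N : ℕ, ∀ t : ℕ, ∃ k < N, t + k ∈ A

/-- `A ⊆ ℕ` is thick: contains arbitrarily long runs of consecutive integers. -/
def IsThick (A : Set ℕ) : Prop := ∀ n : ℕ, ∃ t : ℕ, ∀ k ≤ n, t + k ∈ A

/-- `N(A, ε) = {n : diam (fⁿ(A)) > ε}` for a cascade `f`. -/
def sensTimes {X : Type*} [PseudoMetricSpace X] (f : X → X) (A : Set X) (ε : ℝ) : Set ℕ :=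
  {n : ℕ | ENNReal.ofReal ε < EMetric.diam (f^[n] '' A)}

/-- Sensitivity of a cascade. -/
def Sensitive {X : Type*} [PseudoMetricSpace X] (f : X → X) : Prop :=
  ∃ ε > (0 : ℝ), ∀ U : Set X, IsOpen U → U.Nonempty → (sensTimes f U ε).Nonempty

/-- Syndetic sensitivity of a cascade. -/
def SyndeticallySensitive {X : Type*} [PseudoMetricSpace X] (f : X → X) : Prop :=
  ∃ ε > (0 : ℝ), ∀ U : Set X, IsOpen U → U.Nonempty → IsSyndetic (sensTimes f U ε)

/-- Thick sensitivity of a cascade. -/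
def ThicklySensitive {X : Type*} [PseudoMetricSpace X] (f : X → X) : Prop :=
  ∃ ε > (0 : ℝ), ∀ U : Set X, IsOpen U → U.Nonempty → IsThick (sensTimes f U ε)

/-- Cofinite sensitivity of a cascade. -/
def CofinitelySensitive {X : Type*} [PseudoMetricSpace X] (f : X → X) : Prop :=
  ∃ ε > (0 : ℝ), ∀ U : Set X, IsOpen U → U.Nonempty → (sensTimes f U ε)ᶜ.Finite


open Set

noncomputable section
namespace TS

def jj (m : ℕ) : ℕ := if m < (Nat.sqrt m) ^ 2 + Nat.sqrt m then Nat.sqrt m else Nat.sqrt m + 1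

/-- lengths sequence: on block `j ≥ 1` occupying `[j²-j, j²+j)`,
value `2⁻¹^j` on `[j²-j, j²)` and `j` on `[j², j²+j)`. -/
def cc (m : ℕ) : ℝ := if m < (jj m) ^ 2 then (2 : ℝ)⁻¹ ^ jj m else (jj m : ℝ)

lemma cc_high {j m : ℕ} (hj : 1 ≤ j) (h1 : j ^ 2 ≤ m) (h2 : m < j ^ 2 + j) :
    cc m = (j : ℝ) := by
  have hs : Nat.sqrt m = j := by
    have h3 : j ≤ Nat.sqrt m := Nat.le_sqrt.mpr (by nlinarith)
    have h4 : Nat.sqrt m < j + 1 := Nat.sqrt_lt.mpr (by nlinarith)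
    omega
  have hjj : jj m = j := by rw [jj, hs, if_pos (by omega)]
  rw [cc, hjj, if_neg (by omega)]

lemma cc_low {j m : ℕ} (hj : 1 ≤ j) (h1 : j ^ 2 ≤ m + j) (h2 : m < j ^ 2) :
    cc m = (2 : ℝ)⁻¹ ^ j := by
  obtain ⟨i, rfl⟩ : ∃ i, j = i + 1 := ⟨j - 1, by omega⟩
  have hs : Nat.sqrt m = i := by
    have h3 : i ≤ Nat.sqrt m := Nat.le_sqrt.mpr (by nlinarith)
    have h4 : Nat.sqrt m < i + 1 := Nat.sqrt_lt.mpr (by nlinarith)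
    omega
  have hjj : jj m = i + 1 := by rw [jj, hs, if_neg (by nlinarith)]
  rw [cc, hjj, if_pos (by omega)]

lemma jj_pos (m : ℕ) : 1 ≤ jj m := by
  rw [jj]
  split
  · rename_i h
    have h2 : Nat.sqrt m ^ 2 ≤ m := by
      have := Nat.sqrt_le' m; nlinarith [Nat.sqrt_le' m, sq (Nat.sqrt m)]
    omega
  · omega

lemma cc_pos (m : ℕ) : 0 < cc m := by
  rw [cc]
  split
  · positivity
  · exact_mod_cast jj_pos m

end TS
noncomputable section
namespace TS
open Set

/-- left endpoints -/
def aa : ℕ → ℝ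
  | 0 => 0
  | m + 1 => aa m + cc m + 1

/-- the components -/
def II (m : ℕ) : Set ℝ := Icc (aa m) (aa m + cc m)

def XX : Set ℝ := ⋃ m, II m

lemma aa_succ (m : ℕ) : aa (m + 1) = aa m + cc m + 1 := rfl

lemma aa_lt {m n : ℕ} (h : m < n) : aa m + cc m + 1 ≤ aa n := by
  induction n with
  | zero => omega
  | succ n ih =>
    rcases Nat.lt_succ_iff_lt_or_eq.mp h with h' | rfl
    · have := ih h'
      have := cc_pos n
      rw [aa_succ]; linarith
    · rw [aa_succ]

lemma aa_ge (m : ℕ) : (m : ℝ) ≤ aa m := by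
  induction m with
  | zero => simp [aa]
  | succ m ih =>
    have := cc_pos m
    rw [aa_succ]; push_cast; linarith

lemma II_disjoint {m n : ℕ} {x : ℝ} (hm : x ∈ II m) (hn : x ∈ II n) : m = n := by
  by_contra h
  rcases Nat.lt_or_ge m n with h' | h'
  · have := aa_lt h'
    have := cc_pos m
    exact absurd (hm.2) (by have := hn.1; push_neg; linarith)
  · have h'' : n < m := by omega
    have := aa_lt h''
    have := cc_pos n
    exact absurd (hn.2) (by have := hm.1; push_neg; linarith)

/-- any point of `XX` in a 1-neighborhood of `II n` is in `II n`. -/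
lemma mem_II_of_near {n : ℕ} {x : ℝ} (hx : x ∈ XX)
    (h : x ∈ Ioo (aa n - 1) (aa n + cc n + 1)) : x ∈ II n := by
  obtain ⟨m, hm⟩ : ∃ m, x ∈ II m := mem_iUnion.mp hx
  rcases lt_trichotomy m n with h' | rfl | h'
  · exfalso
    have h1 := aa_lt h'
    have := hm.2
    have := h.1
    linarith
  · exact hm
  · exfalso
    have h1 := aa_lt h'
    have := hm.1
    have := h.2
    linarith

lemma isClosed_XX : IsClosed XX := by
  apply LocallyFinite.isClosed_iUnion
  · intro x
    refine ⟨Ioo (x - 1) (x + 1), Ioo_mem_nhds (by linarith) (by linarith), ?_⟩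
    apply Set.Finite.subset (Set.finite_Iio (Nat.ceil (x + 1)))
    rintro m ⟨y, hy1, hy2⟩
    have h1 : (m : ℝ) ≤ aa m := aa_ge m
    have h2 : aa m ≤ y := hy1.1
    have h3 : y < x + 1 := hy2.2
    exact Nat.lt_ceil.mpr (by linarith)
  · intro m; exact isClosed_Icc

/-- the affine step map on component `m`. -/
def gg (m : ℕ) (x : ℝ) : ℝ := aa (m + 1) + (cc (m + 1) / cc m) * (x - aa m)

lemma gg_mem {m : ℕ} {x : ℝ} (hx : x ∈ II m) : gg m x ∈ II (m + 1) := by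
  have hc := cc_pos m
  have hc' := cc_pos (m + 1)
  have h1 : 0 ≤ x - aa m := by linarith [hx.1]
  have h2 : x - aa m ≤ cc m := by linarith [hx.2]
  constructor
  · have : 0 ≤ (cc (m + 1) / cc m) * (x - aa m) := by positivity
    simp only [gg]; linarith
  · have : (cc (m + 1) / cc m) * (x - aa m) ≤ (cc (m + 1) / cc m) * cc m :=
      mul_le_mul_of_nonneg_left h2 (by positivity)
    rw [div_mul_cancel₀ _ (ne_of_gt hc)] at this
    simp only [gg]; linarith

end TS
noncomputable section
namespace TS
open Set

def idx (x : ℝ) (hx : x ∈ XX) : ℕ := (mem_iUnion.mp hx).choose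

lemma idx_spec (x : ℝ) (hx : x ∈ XX) : x ∈ II (idx x hx) := (mem_iUnion.mp hx).choose_spec

lemma idx_eq {x : ℝ} (hx : x ∈ XX) {n : ℕ} (hn : x ∈ II n) : idx x hx = n :=
  II_disjoint (idx_spec x hx) hn

open Classical in
/-- the cascade on the ambient ℝ level -/
def FF0 (x : ℝ) : ℝ := if hx : x ∈ XX then gg (idx x hx) x else 0

lemma FF0_eq {x : ℝ} (hx : x ∈ XX) {n : ℕ} (hn : x ∈ II n) : FF0 x = gg n x := by
  rw [FF0, dif_pos hx, idx_eq hx hn]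

lemma FF0_mem {x : ℝ} (hx : x ∈ XX) : FF0 x ∈ XX := by
  rw [FF0, dif_pos hx]
  exact mem_iUnion.mpr ⟨_, gg_mem (idx_spec x hx)⟩

/-- the cascade -/
def FF : XX → XX := fun x => ⟨FF0 x.1, FF0_mem x.2⟩

lemma continuous_FF : Continuous FF := by
  apply Continuous.subtype_mk
  rw [continuous_iff_continuousAt]
  intro x
  set n := idx x.1 x.2 with hn
  have hxn : x.1 ∈ II n := idx_spec x.1 x.2
  have hV : {y : XX | y.1 ∈ Ioo (aa n - 1) (aa n + cc n + 1)} ∈ nhds x := by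
    apply (IsOpen.preimage continuous_subtype_val isOpen_Ioo).mem_nhds
    show x.1 ∈ Ioo _ _
    rw [mem_Ioo]
    exact ⟨by linarith [hxn.1], by linarith [hxn.2]⟩
  have heq : (fun y : XX => FF0 y.1) =ᶠ[nhds x] (fun y : XX => gg n y.1) := by
    filter_upwards [hV] with y hy
    exact FF0_eq y.2 (mem_II_of_near y.2 hy)
  apply ContinuousAt.congr _ heq.symm
  exact ((continuous_const.add (continuous_const.mul
    ((continuous_subtype_val).sub continuous_const))).continuousAt)

lemma iter_val {n : ℕ} (k : ℕ) (x : XX) (hx : x.1 ∈ II n) :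
    (FF^[k] x).1 = aa (n + k) + (cc (n + k) / cc n) * (x.1 - aa n) ∧
      (FF^[k] x).1 ∈ II (n + k) := by
  induction k generalizing x n with
  | zero =>
    refine ⟨?_, by simpa using hx⟩
    simp only [Function.iterate_zero, id_eq, Nat.add_zero]
    rw [div_self (ne_of_gt (cc_pos n))]
    ring
  | succ k ih =>
    rw [Function.iterate_succ_apply]
    have hFx : (FF x).1 = gg n x.1 := FF0_eq x.2 hx
    have hFm : (FF x).1 ∈ II (n + 1) := by rw [hFx]; exact gg_mem hx
    obtain ⟨h1, h2⟩ := ih (FF x) hFm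
    constructor
    · rw [h1, hFx]
      simp only [gg]
      have hc := (cc_pos n).ne'
      have hc1 := (cc_pos (n + 1)).ne'
      have harith : n + 1 + k = n + (k + 1) := by omega
      rw [harith]
      field_simp
      ring
    · have harith : n + 1 + k = n + (k + 1) := by omega
      rwa [harith] at h2

end TS
noncomputable section
namespace TS
open Set

lemma diam_eq (S : Set XX) : EMetric.diam S = EMetric.diam (Subtype.val '' S) :=
  (Isometry.ediam_image isometry_subtype_coe S).symm

lemma mem_XX {n : ℕ} {x : ℝ} (h : x ∈ II n) : x ∈ XX := mem_iUnion.mpr ⟨n, h⟩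

lemma diam_upper (k : ℕ) (U : Set XX) (hU : ∀ y ∈ U, (y : ℝ) ∈ II 0) :
    EMetric.diam (FF^[k] '' U) ≤ ENNReal.ofReal (cc k) := by
  rw [diam_eq]
  have hsub : Subtype.val '' (FF^[k] '' U) ⊆ II k := by
    rintro _ ⟨_, ⟨y, hy, rfl⟩, rfl⟩
    have := (iter_val k y (hU y hy)).2
    simpa using this
  calc EMetric.diam (Subtype.val '' (FF^[k] '' U)) ≤ EMetric.diam (II k) :=
        EMetric.diam_mono hsub
    _ = ENNReal.ofReal (cc k) := by rw [II, EMetric.diam, Real.ediam_Icc]; ring_nf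

end TS

namespace TS
open Set

lemma not_syndetic : ¬ SyndeticallySensitive FF := by
  rintro ⟨ε, hε, hall⟩
  -- the test open set: the first component
  set U₀ : Set XX := Subtype.val ⁻¹' II 0 with hU₀
  have hU₀open : IsOpen U₀ := by
    have : U₀ = Subtype.val ⁻¹' Ioo (aa 0 - 1) (aa 0 + cc 0 + 1) := by
      ext y
      constructor
      · intro hy
        have h1 : (y : ℝ) ∈ II 0 := hy
        exact ⟨by linarith [h1.1], by linarith [h1.2]⟩
      · intro hy
        exact mem_II_of_near y.2 hy
    rw [this]
    exact IsOpen.preimage continuous_subtype_val isOpen_Ioo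
  have h00 : aa 0 ∈ II 0 := ⟨le_refl _, by linarith [cc_pos 0]⟩
  have hU₀ne : U₀.Nonempty := ⟨⟨aa 0, mem_XX h00⟩, h00⟩
  obtain ⟨N, hN⟩ := hall U₀ hU₀open hU₀ne
  obtain ⟨j₀, hj₀⟩ : ∃ j₀ : ℕ, (2 : ℝ)⁻¹ ^ j₀ < ε :=
    exists_pow_lt_of_lt_one hε (by norm_num)
  set j := max (max j₀ N) 1 with hj
  have hj1 : 1 ≤ j := le_max_right _ _
  have hjN : N ≤ j := le_trans (le_max_right _ _) (le_max_left _ _)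
  have hjj0 : j₀ ≤ j := le_trans (le_max_left _ _) (le_max_left _ _)
  have hjsq : j ≤ j ^ 2 := by nlinarith
  obtain ⟨k, hkN, hk⟩ := hN (j ^ 2 - j)
  have hcc : cc (j ^ 2 - j + k) = (2 : ℝ)⁻¹ ^ j := by
    apply cc_low hj1 (by omega) (by omega)
  have hle : cc (j ^ 2 - j + k) ≤ ε := by
    rw [hcc]
    calc (2 : ℝ)⁻¹ ^ j ≤ (2 : ℝ)⁻¹ ^ j₀ :=
          pow_le_pow_of_le_one (by norm_num) (by norm_num) hjj0
      _ ≤ ε := le_of_lt hj₀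
  have hup := diam_upper (j ^ 2 - j + k) U₀ (fun y hy => hy)
  have : ENNReal.ofReal ε < ENNReal.ofReal ε :=
    lt_of_lt_of_le hk (le_trans hup (ENNReal.ofReal_le_ofReal hle))
  exact lt_irrefl _ this

end TS
namespace TS
open Set

lemma thick : ThicklySensitive FF := by
  refine ⟨1, one_pos, ?_⟩
  intro U hU hUne
  obtain ⟨x₀, hx₀⟩ := hUne
  set n := idx x₀.1 x₀.2 with hn
  have hxn : x₀.1 ∈ II n := idx_spec x₀.1 x₀.2
  obtain ⟨δ, hδ, hball⟩ := Metric.isOpen_iff.mp hU x₀ hx₀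
  set ℓ := min (δ / 2) (cc n) with hℓdef
  have hℓpos : 0 < ℓ := lt_min (by linarith) (cc_pos n)
  have hℓδ : ℓ ≤ δ / 2 := min_le_left _ _
  set lo := max (aa n) (x₀.1 - ℓ) with hlo
  set hi := min (aa n + cc n) (x₀.1 + ℓ) with hhi
  have hx1 := hxn.1
  have hx2 := hxn.2
  have hlo_le : lo ≤ x₀.1 := max_le hx1 (by linarith)
  have hle_hi : x₀.1 - ℓ ≤ hi := le_min (by linarith) (by linarith)
  have hgap : ℓ ≤ hi - lo := by
    rcases le_total (x₀.1 + ℓ) (aa n + cc n) with h | h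
    · have he : hi = x₀.1 + ℓ := min_eq_right h
      rw [he]; linarith
    · have he : hi = aa n + cc n := min_eq_left h
      rcases le_total (x₀.1 - ℓ) (aa n) with h2 | h2
      · have he2 : lo = aa n := max_eq_left h2
        have hc : ℓ ≤ cc n := min_le_right _ _
        rw [he, he2]; linarith
      · have he2 : lo = x₀.1 - ℓ := max_eq_right h2
        rw [he, he2]; linarith
  have hlomem : lo ∈ II n :=
    ⟨le_max_left _ _, by
      have : lo ≤ hi := by linarith
      exact le_trans this (min_le_left _ _)⟩
  have hhimem : hi ∈ II n :=
    ⟨by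
      have : lo ≤ hi := by linarith
      exact le_trans (le_max_left _ _) this, min_le_left _ _⟩
  set plo : XX := ⟨lo, mem_XX hlomem⟩ with hplo
  set phi : XX := ⟨hi, mem_XX hhimem⟩ with hphi
  have hplov : (plo : ℝ) = lo := rfl
  have hphiv : (phi : ℝ) = hi := rfl
  have hploU : plo ∈ U := by
    apply hball
    rw [Metric.mem_ball, Subtype.dist_eq, Real.dist_eq, abs_sub_lt_iff]
    constructor
    · linarith
    · have : x₀.1 - ℓ ≤ lo := le_max_right _ _
      linarith
  have hphiU : phi ∈ U := by
    apply hball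
    rw [Metric.mem_ball, Subtype.dist_eq, Real.dist_eq, abs_sub_lt_iff]
    constructor
    · have : hi ≤ x₀.1 + ℓ := min_le_right _ _
      linarith
    · linarith
  -- thickness
  intro L
  set j := max (max (n + 1) (L + 1)) (Nat.ceil (cc n / ℓ) + 1) with hj
  have hj1 : 1 ≤ j := by omega
  have hjn : n < j := lt_of_lt_of_le (Nat.lt_succ_self n)
    (le_trans (le_max_left _ _) (le_max_left _ _))
  have hjL : L < j := lt_of_lt_of_le (Nat.lt_succ_self L)
    (le_trans (le_max_right _ _) (le_max_left _ _))
  have hjc : (cc n / ℓ) < (j : ℝ) := by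
    have h1 : cc n / ℓ ≤ (Nat.ceil (cc n / ℓ) : ℝ) := Nat.le_ceil _
    have h2 : Nat.ceil (cc n / ℓ) + 1 ≤ j := le_max_right _ _
    have h3 : ((Nat.ceil (cc n / ℓ) : ℕ) : ℝ) + 1 ≤ (j : ℝ) := by exact_mod_cast h2
    linarith
  have hjsq : n ≤ j ^ 2 := by nlinarith
  refine ⟨j ^ 2 - n, ?_⟩
  intro k hk
  have hidx : n + (j ^ 2 - n + k) = j ^ 2 + k := by omega
  have hcc : cc (j ^ 2 + k) = (j : ℝ) :=
    cc_high hj1 (by omega) (by omega)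
  -- two image points witness large diameter
  have hlov := (iter_val (j ^ 2 - n + k) plo hlomem).1
  have hhiv := (iter_val (j ^ 2 - n + k) phi hhimem).1
  have hd : (FF^[j ^ 2 - n + k] phi).1 - (FF^[j ^ 2 - n + k] plo).1
      = (cc (n + (j ^ 2 - n + k)) / cc n) * (hi - lo) := by
    rw [hlov, hhiv]; ring
  have hcpos := cc_pos n
  have hval : (1 : ℝ) < (cc (n + (j ^ 2 - n + k)) / cc n) * (hi - lo) := by
    rw [hidx, hcc]
    have h1 : cc n < (j : ℝ) * ℓ := by
      rw [div_lt_iff₀ hℓpos] at hjc; linarith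
    have hjpos : (0 : ℝ) < (j : ℝ) := by exact_mod_cast hj1
    have h2 : ((j : ℝ) / cc n) * ℓ ≤ ((j : ℝ) / cc n) * (hi - lo) :=
      mul_le_mul_of_nonneg_left hgap (div_pos hjpos hcpos).le
    have h3 : (1 : ℝ) < ((j : ℝ) / cc n) * ℓ := by
      rw [div_mul_eq_mul_div, lt_div_iff₀ hcpos]
      linarith
    linarith
  show ENNReal.ofReal 1 < EMetric.diam (FF^[j ^ 2 - n + k] '' U)
  rw [diam_eq]
  have hmem1 : (FF^[j ^ 2 - n + k] plo).1 ∈ Subtype.val '' (FF^[j ^ 2 - n + k] '' U) :=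
    mem_image_of_mem _ (mem_image_of_mem _ hploU)
  have hmem2 : (FF^[j ^ 2 - n + k] phi).1 ∈ Subtype.val '' (FF^[j ^ 2 - n + k] '' U) :=
    mem_image_of_mem _ (mem_image_of_mem _ hphiU)
  have hedist := EMetric.edist_le_diam_of_mem hmem2 hmem1
  apply lt_of_lt_of_le _ hedist
  rw [edist_dist, Real.dist_eq, hd]
  have hqpos : 0 < (cc (n + (j ^ 2 - n + k)) / cc n) * (hi - lo) := lt_trans one_pos hval
  rw [abs_of_nonneg hqpos.le]
  exact (ENNReal.ofReal_lt_ofReal_iff hqpos).mpr hval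

theorem main :
    ∃ (X : Set ℝ), IsClosed X ∧
      ∃ f : X → X, Continuous f ∧ ThicklySensitive f ∧ ¬ SyndeticallySensitive f :=
  ⟨XX, isClosed_XX, FF, continuous_FF, thick, not_syndetic⟩

end TS

/-- There is a cascade on a complete metric space (a closed subset of `ℝ`) which is
thickly sensitive but not syndetically sensitive. -/
theorem exists_thicklySensitive_not_syndeticallySensitive :
    ∃ (X : Set ℝ), IsClosed X ∧
      ∃ f : X → X, Continuous f ∧ ThicklySensitive f ∧ ¬ SyndeticallySensitive f :=
  TS.main
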